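/- Let Ω ⊆ ℝ³ be a non-empty open set, Grad₀ the closure of the symmetrized gradient on compactly supported smooth vector fields, Div₀ the closure of the row-wise divergence on compactly supported smooth symmetric-matrix-valued fields, Grad := -(Div₀)* and Div := -(Grad₀)*. Then the orthogonal complement of D(Grad₀) in the Hilbert space D(Grad) (with graph inner product) is N(1 - Div Grad) = {u ∈ D(Grad) : Grad u ∈ D(Div) and Div Grad u = u}, and the orthogonal complement of D(Div₀) in D(Div) is N(1 - Grad Div). -/

import Mathlib

open LinearPMap

lemma aux_ortho {H K : Type*}
    [NormedAddCommGroup H] [InnerProductSpace ℂ H] [CompleteSpace H]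
    [NormedAddCommGroup K] [InnerProductSpace ℂ K] [CompleteSpace K]
    (G₀ : H →ₗ.[ℂ] K) (A : H →ₗ.[ℂ] K)
    (hGdense : Dense (G₀.domain : Set H))
    (hle : G₀ ≤ A) (u : A.domain) :
    (∀ v : G₀.domain,
        (inner ℂ (u : H) (v : H) : ℂ) + inner ℂ (A u) (A ⟨(v : H), hle.1 v.2⟩) = 0)
      ↔ ∃ h : A u ∈ (-G₀.adjoint).domain,
          (-G₀.adjoint) ⟨A u, h⟩ = (u : H) := by
  have hApply : ∀ v : G₀.domain, A ⟨(v : H), hle.1 v.2⟩ = G₀ v := fun v => (hle.2 rfl).symm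
  constructor
  · intro hcond
    have key : ∀ v : G₀.domain, (inner ℂ (-(u : H)) ((v : H)) : ℂ) = inner ℂ (A u) (G₀ v) := by
      intro v
      have h := hcond v
      rw [hApply v] at h
      rw [inner_neg_left]
      linear_combination -h
    have hmem : A u ∈ G₀.adjoint.domain :=
      mem_adjoint_domain_of_exists _ ⟨-(u : H), key⟩
    refine ⟨hmem, ?_⟩
    have h2 : G₀.adjoint ⟨A u, hmem⟩ = -(u : H) := adjoint_apply_eq hGdense _ key
    rw [LinearPMap.neg_apply, h2, neg_neg]
  · rintro ⟨hmem, heq⟩ v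
    rw [LinearPMap.neg_apply, neg_eq_iff_eq_neg] at heq
    have h1 : (inner ℂ (G₀.adjoint ⟨A u, hmem⟩) ((v : H)) : ℂ) = inner ℂ (A u) (G₀ v) :=
      (adjoint_isFormalAdjoint hGdense) ⟨A u, hmem⟩ v
    rw [hApply v, ← h1, heq, inner_neg_left]
    ring

/-- With `G₀ = Grad₀` (closure of the symmetrized gradient on compactly
supported smooth vector fields, `H = L²(Ω)³`, `K = sym[L²(Ω)^{3×3}]`),
`D₀ = Div₀` (closure of the row-wise divergence), `Grad := -(Div₀)*` and
`Div := -(Grad₀)*`: the orthogonal complement of `D(Grad₀)` in the Hilbert space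
`D(Grad)` with graph inner product is
`N(1 - Div Grad) = {u ∈ D(Grad) : Grad u ∈ D(Div) ∧ Div Grad u = u}`, and the
orthogonal complement of `D(Div₀)` in `D(Div)` is `N(1 - Grad Div)`. -/
theorem stmt1 {H K : Type*}
    [NormedAddCommGroup H] [InnerProductSpace ℂ H] [CompleteSpace H]
    [NormedAddCommGroup K] [InnerProductSpace ℂ K] [CompleteSpace K]
    (G₀ : H →ₗ.[ℂ] K)                       -- Grad₀
    (D₀ : K →ₗ.[ℂ] H)                       -- Div₀
    (hGdense : Dense (G₀.domain : Set H)) (hDdense : Dense (D₀.domain : Set K))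
    (hGclosed : G₀.IsClosed) (hDclosed : D₀.IsClosed)
    (hG_le : G₀ ≤ -D₀.adjoint)               -- Grad = -(Div₀)* extends Grad₀
    (hD_le : D₀ ≤ -G₀.adjoint)               -- Div = -(Grad₀)* extends Div₀
    :
    -- orthogonal complement of D(Grad₀) in D(Grad) is N(1 - Div Grad):
    (∀ u : (-D₀.adjoint).domain,
      (∀ v : G₀.domain,
          (inner ℂ (u : H) (v : H) : ℂ)
            + inner ℂ ((-D₀.adjoint) u) ((-D₀.adjoint) ⟨(v : H), hG_le.1 v.2⟩) = 0)
        ↔ ∃ h : (-D₀.adjoint) u ∈ (-G₀.adjoint).domain,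
            (-G₀.adjoint) ⟨(-D₀.adjoint) u, h⟩ = (u : H)) ∧
    -- orthogonal complement of D(Div₀) in D(Div) is N(1 - Grad Div):
    (∀ T : (-G₀.adjoint).domain,
      (∀ S : D₀.domain,
          (inner ℂ (T : K) (S : K) : ℂ)
            + inner ℂ ((-G₀.adjoint) T) ((-G₀.adjoint) ⟨(S : K), hD_le.1 S.2⟩) = 0)
        ↔ ∃ h : (-G₀.adjoint) T ∈ (-D₀.adjoint).domain,
            (-D₀.adjoint) ⟨(-G₀.adjoint) T, h⟩ = (T : K)) := by
  exact ⟨fun u => aux_ortho G₀ (-D₀.adjoint) hGdense hG_le u,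
    fun T => aux_ortho D₀ (-G₀.adjoint) hDdense hD_le T⟩
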